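/- The Hermitian dual Λ_k^∨ = {x ∈ ℂ^{n₀} : x ⋆ v ∈ ℤ[ζ_k] for all v ∈ Λ_k} satisfies (1+ζ_k)·Λ_k^∨ = Λ_k; equivalently, Λ_k^∨ = (1+ζ_k)^{−1}·ℤ[ζ_k]^{n₀}. -/

import Mathlib

noncomputable section

open Matrix Complex
open scoped Pointwise

/-- `ζ_k = exp(2πi/k)`, a primitive `k`-th root of unity. -/
def zetaC (k : ℕ) : ℂ := Complex.exp (2 * Real.pi * Complex.I / k)

/-- `ℤ[ζ_k]`, the subring of `ℂ` generated by `ζ_k`. -/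
def Rk (k : ℕ) : Subring ℂ := Subring.closure {zetaC k}

/-- The Hermitian form `x ⋆ y = ∑ conj(x i) * A i j * y j` attached to a Gram matrix `A`. -/
def hermF {n : ℕ} (A : Matrix (Fin n) (Fin n) ℂ) (x y : Fin n → ℂ) : ℂ :=
  ∑ i, ∑ j, (starRingEnd ℂ) (x i) * A i j * y j

/-- The tridiagonal Gram matrix `G_k`. -/
def Gmat (k n : ℕ) : Matrix (Fin n) (Fin n) ℂ :=
  Matrix.of fun i j =>
    if i = j then -((1 + zetaC k) * (1 + (starRingEnd ℂ) (zetaC k)))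
    else if (i : ℕ) + 1 = (j : ℕ) then 1 + (starRingEnd ℂ) (zetaC k)
    else if (j : ℕ) + 1 = (i : ℕ) then 1 + zetaC k
    else 0
lemma zetaC_ne_zero (k : ℕ) : zetaC k ≠ 0 := Complex.exp_ne_zero _

lemma zetaC_mul_conj (k : ℕ) : zetaC k * (starRingEnd ℂ) (zetaC k) = 1 := by
  rw [zetaC, ← Complex.exp_conj, ← Complex.exp_add]
  rw [show (starRingEnd ℂ) (2 * (Real.pi : ℂ) * Complex.I / (k : ℂ))
      = -(2 * (Real.pi : ℂ) * Complex.I / (k : ℂ)) by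
    simp [map_div₀, map_ofNat, Complex.conj_ofReal, Complex.conj_I]; ring]
  rw [add_neg_cancel, Complex.exp_zero]

lemma zetaC_mem (k : ℕ) : zetaC k ∈ Rk k := Subring.subset_closure rfl

lemma zetaC_pow (k : ℕ) (hk0 : k ≠ 0) : zetaC k ^ k = 1 :=
  (Complex.isPrimitiveRoot_exp k hk0).pow_eq_one

lemma conj_zetaC_eq_pow (k : ℕ) (hk0 : k ≠ 0) :
    (starRingEnd ℂ) (zetaC k) = zetaC k ^ (k - 1) := by
  have h2 : zetaC k * zetaC k ^ (k - 1) = 1 := by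
    rw [← pow_succ', Nat.sub_add_cancel (Nat.one_le_iff_ne_zero.mpr hk0)]
    exact zetaC_pow k hk0
  exact mul_left_cancel₀ (zetaC_ne_zero k) ((zetaC_mul_conj k).trans h2.symm)

lemma conj_mem_Rk (k : ℕ) (hk0 : k ≠ 0) : ∀ z ∈ Rk k, (starRingEnd ℂ) z ∈ Rk k := by
  intro z hz
  have h1 : (starRingEnd ℂ) z ∈ (Rk k).map (starRingEnd ℂ) := ⟨z, hz, rfl⟩
  rw [Rk, RingHom.map_closure, Set.image_singleton] at h1
  refine Subring.closure_le.mpr ?_ h1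
  rw [Set.singleton_subset_iff, conj_zetaC_eq_pow k hk0]
  exact Subring.pow_mem _ (zetaC_mem k) _

lemma Gmat_conj (k n : ℕ) (i j : Fin n) :
    (starRingEnd ℂ) (Gmat k n i j) = Gmat k n j i := by
  simp only [Gmat, Matrix.of_apply, Fin.ext_iff]
  rcases eq_or_ne (i : ℕ) (j : ℕ) with h | h
  · rw [if_pos h, if_pos h.symm, map_neg, _root_.map_mul, map_add, map_add, _root_.map_one,
      Complex.conj_conj]
    ring
  · rw [if_neg h, if_neg (Ne.symm h)]
    rcases eq_or_ne ((i : ℕ) + 1) (j : ℕ) with hij | hij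
    · rw [if_pos hij, if_neg (by omega : ¬((j : ℕ) + 1 = (i : ℕ))), if_pos hij, map_add,
        _root_.map_one, Complex.conj_conj]
    · rw [if_neg hij]
      rcases eq_or_ne ((j : ℕ) + 1) (i : ℕ) with hji | hji
      · rw [if_pos hji, if_pos hji, map_add, _root_.map_one]
      · rw [if_neg hji, if_neg hji, if_neg hij, map_zero]

lemma dual_eq (k n : ℕ) (hk0 : k ≠ 0)
    (hα : (1 : ℂ) + zetaC k ≠ 0)
    (H : Matrix (Fin n) (Fin n) ℂ) (hH : ∀ i j, H i j ∈ Rk k)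
    (hHG : ∀ i m : Fin n, ∑ j, H i j * Gmat k n j m = if i = m then 1 + zetaC k else 0) :
    (1 + zetaC k) • {x : Fin n → ℂ |
        ∀ v : Fin n → ℂ, (∀ i, v i ∈ Rk k) → hermF (Gmat k n) x v ∈ Rk k}
      = {x : Fin n → ℂ | ∀ i, x i ∈ Rk k} := by
  have hζR := zetaC_mem k
  have hconjR := conj_mem_Rk k hk0
  have hmulc := zetaC_mul_conj k
  have hαR : (1 : ℂ) + zetaC k ∈ Rk k := Subring.add_mem _ (Subring.one_mem _) hζR
  have hcα : (starRingEnd ℂ) (1 + zetaC k) ≠ 0 := by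
    rw [starRingEnd_apply, star_ne_zero]; exact hα
  ext x
  simp only [Set.mem_smul_set, Set.mem_setOf_eq]
  constructor
  · rintro ⟨y, hy, rfl⟩ i
    simp only [Pi.smul_apply, smul_eq_mul]
    have hd : ∀ j : Fin n, (∑ m, Gmat k n j m * y m) ∈ Rk k := by
      intro j
      have h1 : hermF (Gmat k n) y (fun m => if m = j then 1 else 0) ∈ Rk k := by
        apply hy
        intro m
        split
        · exact Subring.one_mem _
        · exact Subring.zero_mem _
      have h2 : hermF (Gmat k n) y (fun m => if m = j then 1 else 0)
          = ∑ i', (starRingEnd ℂ) (y i') * Gmat k n i' j := by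
        simp only [hermF, mul_ite, mul_one, mul_zero, Finset.sum_ite_eq', Finset.mem_univ,
          if_true]
      rw [h2] at h1
      have h3 := hconjR _ h1
      rw [map_sum] at h3
      have h4 : ∀ m : Fin n,
          (starRingEnd ℂ) ((starRingEnd ℂ) (y m) * Gmat k n m j) = Gmat k n j m * y m := by
        intro m
        rw [_root_.map_mul, Complex.conj_conj, Gmat_conj, mul_comm]
      simpa only [h4] using h3
    have key : (1 + zetaC k) * y i = ∑ j, H i j * ∑ m, Gmat k n j m * y m := by
      have e1 : ∑ j, H i j * ∑ m, Gmat k n j m * y m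
          = ∑ m, (∑ j, H i j * Gmat k n j m) * y m := by
        simp_rw [Finset.mul_sum, Finset.sum_mul]
        rw [Finset.sum_comm]
        exact Finset.sum_congr rfl fun m _ => Finset.sum_congr rfl fun j _ => by ring
      rw [e1]
      simp only [hHG, ite_mul, zero_mul, Finset.sum_ite_eq, Finset.mem_univ, if_true]
    rw [key]
    exact Subring.sum_mem _ fun j _ => Subring.mul_mem _ (hH i j) (hd j)
  · intro hx
    refine ⟨(1 + zetaC k)⁻¹ • x, ?_, ?_⟩
    · intro v hv
      have hcdef : (starRingEnd ℂ) (1 + zetaC k) = 1 + (starRingEnd ℂ) (zetaC k) := by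
        rw [map_add, _root_.map_one]
      have hG : ∀ i j : Fin n, ((starRingEnd ℂ) (1 + zetaC k))⁻¹ * Gmat k n i j ∈ Rk k := by
        intro i j
        simp only [Gmat, Matrix.of_apply]
        split_ifs with h1 h2 h3
        · rw [show ((starRingEnd ℂ) (1 + zetaC k))⁻¹
              * -((1 + zetaC k) * (1 + (starRingEnd ℂ) (zetaC k))) = -(1 + zetaC k) by
            rw [← hcdef, mul_neg, mul_comm (1 + zetaC k), inv_mul_cancel_left₀ hcα]]
          exact Subring.neg_mem _ hαR
        · rw [← hcdef, inv_mul_cancel₀ hcα]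
          exact Subring.one_mem _
        · have hval : ((starRingEnd ℂ) (1 + zetaC k))⁻¹ * (1 + zetaC k) = zetaC k := by
            rw [inv_mul_eq_iff_eq_mul₀ hcα, hcdef, add_mul, one_mul,
              mul_comm ((starRingEnd ℂ) (zetaC k)), hmulc]
            ring
          rw [hval]
          exact hζR
        · rw [mul_zero]; exact Subring.zero_mem _
      have expand : hermF (Gmat k n) ((1 + zetaC k)⁻¹ • x) v
          = ∑ i, ∑ j, (starRingEnd ℂ) (x i)
              * (((starRingEnd ℂ) (1 + zetaC k))⁻¹ * Gmat k n i j) * v j := by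
        refine Finset.sum_congr rfl fun i _ => Finset.sum_congr rfl fun j _ => ?_
        rw [Pi.smul_apply, smul_eq_mul, _root_.map_mul, map_inv₀]
        ring
      rw [expand]
      exact Subring.sum_mem _ fun i _ => Subring.sum_mem _ fun j _ =>
        Subring.mul_mem _ (Subring.mul_mem _ (hconjR _ (hx i)) (hG i j)) (hv j)
    · rw [smul_smul, mul_inv_cancel₀ hα, one_smul]


lemma halpha3 : (1 : ℂ) + zetaC 3 ≠ 0 := by
  have hprim : IsPrimitiveRoot (zetaC 3) 3 := Complex.isPrimitiveRoot_exp 3 (by norm_num)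
  intro h
  exact hprim.pow_ne_one_of_pos_of_lt (by norm_num) (by norm_num)
    (by linear_combination (zetaC 3 - 1) * h : zetaC 3 ^ 2 = 1)

lemma hrelk3 : zetaC 3 ^ 2 = -zetaC 3 - 1 := by
  have hprim : IsPrimitiveRoot (zetaC 3) 3 := Complex.isPrimitiveRoot_exp 3 (by norm_num)
  have h3 : zetaC 3 ^ 3 = 1 := hprim.pow_eq_one
  have hne1 : zetaC 3 ≠ 1 := hprim.ne_one (by norm_num)
  have hfac : (zetaC 3 - 1) * (zetaC 3 ^ 2 + zetaC 3 + 1) = 0 := by linear_combination h3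
  rcases mul_eq_zero.mp hfac with h | h
  · exact absurd (sub_eq_zero.mp h) hne1
  · linear_combination h

lemma hrel3k3 : zetaC 3 ^ 3 = 1 :=
  (Complex.isPrimitiveRoot_exp 3 (by norm_num)).pow_eq_one

lemma hconjk3 : (starRingEnd ℂ) (zetaC 3) = -1 - zetaC 3 := by
  apply mul_left_cancel₀ (zetaC_ne_zero 3)
  rw [zetaC_mul_conj 3]
  linear_combination hrelk3

lemma halpha4 : (1 : ℂ) + zetaC 4 ≠ 0 := by
  have hprim : IsPrimitiveRoot (zetaC 4) 4 := Complex.isPrimitiveRoot_exp 4 (by norm_num)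
  intro h
  exact hprim.pow_ne_one_of_pos_of_lt (by norm_num) (by norm_num)
    (by linear_combination (zetaC 4 - 1) * h : zetaC 4 ^ 2 = 1)

lemma hrelk4 : zetaC 4 ^ 2 = -1 := by
  have hprim : IsPrimitiveRoot (zetaC 4) 4 := Complex.isPrimitiveRoot_exp 4 (by norm_num)
  have h4 : zetaC 4 ^ 4 = 1 := hprim.pow_eq_one
  have h2ne : zetaC 4 ^ 2 ≠ 1 := hprim.pow_ne_one_of_pos_of_lt (by norm_num) (by norm_num)
  have hfac : (zetaC 4 ^ 2 - 1) * (zetaC 4 ^ 2 + 1) = 0 := by linear_combination h4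
  rcases mul_eq_zero.mp hfac with h | h
  · exact absurd (sub_eq_zero.mp h) h2ne
  · linear_combination h

lemma hrel3k4 : zetaC 4 ^ 3 = -zetaC 4 := by linear_combination zetaC 4 * hrelk4

lemma hconjk4 : (starRingEnd ℂ) (zetaC 4) = -zetaC 4 := by
  apply mul_left_cancel₀ (zetaC_ne_zero 4)
  rw [zetaC_mul_conj 4]
  linear_combination hrelk4

lemma halpha6 : (1 : ℂ) + zetaC 6 ≠ 0 := by
  have hprim : IsPrimitiveRoot (zetaC 6) 6 := Complex.isPrimitiveRoot_exp 6 (by norm_num)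
  intro h
  exact hprim.pow_ne_one_of_pos_of_lt (by norm_num) (by norm_num)
    (by linear_combination (zetaC 6 - 1) * h : zetaC 6 ^ 2 = 1)

lemma hrel3k6 : zetaC 6 ^ 3 = -1 := by
  have hprim : IsPrimitiveRoot (zetaC 6) 6 := Complex.isPrimitiveRoot_exp 6 (by norm_num)
  have h6 : zetaC 6 ^ 6 = 1 := hprim.pow_eq_one
  have h3ne : zetaC 6 ^ 3 ≠ 1 := hprim.pow_ne_one_of_pos_of_lt (by norm_num) (by norm_num)
  have hfac : (zetaC 6 ^ 3 - 1) * (zetaC 6 ^ 3 + 1) = 0 := by linear_combination h6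
  rcases mul_eq_zero.mp hfac with h | h
  · exact absurd (sub_eq_zero.mp h) h3ne
  · linear_combination h

lemma hrelk6 : zetaC 6 ^ 2 = zetaC 6 - 1 := by
  have hfac : (1 + zetaC 6) * (zetaC 6 ^ 2 - zetaC 6 + 1) = 0 := by linear_combination hrel3k6
  rcases mul_eq_zero.mp hfac with h | h
  · exact absurd h halpha6
  · linear_combination h

lemma hconjk6 : (starRingEnd ℂ) (zetaC 6) = 1 - zetaC 6 := by
  apply mul_left_cancel₀ (zetaC_ne_zero 6)
  rw [zetaC_mul_conj 6]
  linear_combination hrelk6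

noncomputable def A3 : Matrix (Fin 4) (Fin 4) ℤ := !![-1, 0, 0, -1;
    0, 0, 1, 0;
    -1, 0, 0, 0;
    -1, -1, 0, -1]
noncomputable def B3 : Matrix (Fin 4) (Fin 4) ℤ := !![-1, 0, -1, -1;
    0, 0, 0, -1;
    0, 1, 0, 0;
    -1, 0, 0, -1]
noncomputable def H3 : Matrix (Fin 4) (Fin 4) ℂ :=
  Matrix.of fun i j => (A3 i j : ℂ) + (B3 i j : ℂ) * zetaC 3

lemma hH3 : ∀ i j, H3 i j ∈ Rk 3 := fun _ _ =>
  Subring.add_mem _ (intCast_mem _ _) (Subring.mul_mem _ (intCast_mem _ _) (zetaC_mem 3))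

set_option maxHeartbeats 2000000 in
lemma hHG3 : ∀ i m : Fin 4,
    ∑ j, H3 i j * Gmat 3 4 j m = if i = m then 1 + zetaC 3 else 0 := by
  have hconj := hconjk3
  have hrel := hrelk3
  have hrel3 := hrel3k3
  intro i m
  fin_cases i <;> fin_cases m <;>
    simp only [H3, A3, B3, Gmat, Matrix.of_apply, hconj, Fin.sum_univ_succ, Fin.sum_univ_zero,
      Fin.isValue, Matrix.cons_val', Matrix.cons_val_zero, Matrix.cons_val_one, Matrix.head_cons,
      Matrix.head_fin_const, Matrix.cons_val_succ, Matrix.empty_val', Matrix.cons_val_fin_one,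
      Fin.mk_zero, Fin.mk_one, Fin.val_zero, Fin.val_one, Fin.succ_zero_eq_one] <;>
    norm_num [Fin.ext_iff, Fin.val_succ] <;>
    first
      | ring1
      | (simp only [hrel3, hrel]; ring1)
      | (ring_nf; simp only [hrel3, hrel]; ring1)

noncomputable def A4 : Matrix (Fin 6) (Fin 6) ℤ := !![-1, -1, 0, 0, -1, -1;
    0, -1, 0, 1, 0, -1;
    0, 0, 0, 1, 1, 0;
    -1, -1, 0, 0, 0, 0;
    -1, -2, -1, 0, -1, -1;
    0, -1, -1, 0, 0, -1]
noncomputable def B4 : Matrix (Fin 6) (Fin 6) ℤ := !![-1, 0, 0, -1, -1, 0;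
    -1, -1, 0, -1, -2, -1;
    0, 0, 0, 0, -1, -1;
    0, 1, 1, 0, 0, 0;
    -1, 0, 1, 0, -1, 0;
    -1, -1, 0, 0, -1, -1]
noncomputable def H4 : Matrix (Fin 6) (Fin 6) ℂ :=
  Matrix.of fun i j => (A4 i j : ℂ) + (B4 i j : ℂ) * zetaC 4

lemma hH4 : ∀ i j, H4 i j ∈ Rk 4 := fun _ _ =>
  Subring.add_mem _ (intCast_mem _ _) (Subring.mul_mem _ (intCast_mem _ _) (zetaC_mem 4))

set_option maxHeartbeats 2000000 in
lemma hHG4 : ∀ i m : Fin 6,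
    ∑ j, H4 i j * Gmat 4 6 j m = if i = m then 1 + zetaC 4 else 0 := by
  have hconj := hconjk4
  have hrel := hrelk4
  have hrel3 := hrel3k4
  intro i m
  fin_cases i <;> fin_cases m <;>
    simp only [H4, A4, B4, Gmat, Matrix.of_apply, hconj, Fin.sum_univ_succ, Fin.sum_univ_zero,
      Fin.isValue, Matrix.cons_val', Matrix.cons_val_zero, Matrix.cons_val_one, Matrix.head_cons,
      Matrix.head_fin_const, Matrix.cons_val_succ, Matrix.empty_val', Matrix.cons_val_fin_one,
      Fin.mk_zero, Fin.mk_one, Fin.val_zero, Fin.val_one, Fin.succ_zero_eq_one] <;>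
    norm_num [Fin.ext_iff, Fin.val_succ] <;>
    first
      | ring1
      | (simp only [hrel3, hrel]; ring1)
      | (ring_nf; simp only [hrel3, hrel]; ring1)

noncomputable def A6 : Matrix (Fin 10) (Fin 10) ℤ := !![-1, -2, -2, -1, 0, 0, -1, -2, -2, -1;
    0, -2, -3, -2, 0, 1, 0, -2, -3, -2;
    1, 0, -2, -2, 0, 2, 2, 0, -2, -2;
    1, 1, 0, -1, 0, 2, 3, 2, 0, -1;
    0, 0, 0, 0, 0, 1, 2, 2, 1, 0;
    -1, -2, -2, -1, 0, 0, 0, 0, 0, 0;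
    -1, -3, -4, -3, -1, 0, -1, -2, -2, -1;
    0, -2, -4, -4, -2, 0, 0, -2, -3, -2;
    1, 0, -2, -3, -2, 0, 1, 0, -2, -2;
    1, 1, 0, -1, -1, 0, 1, 1, 0, -1]
noncomputable def B6 : Matrix (Fin 10) (Fin 10) ℤ := !![-1, 0, 1, 1, 0, -1, -1, 0, 1, 1;
    -2, -2, 0, 1, 0, -2, -3, -2, 0, 1;
    -2, -3, -2, 0, 0, -2, -4, -4, -2, 0;
    -1, -2, -2, -1, 0, -1, -3, -4, -3, -1;
    0, 0, 0, 0, 0, 0, -1, -2, -2, -1;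
    0, 1, 2, 2, 1, 0, 0, 0, 0, 0;
    -1, 0, 2, 3, 2, 0, -1, 0, 1, 1;
    -2, -2, 0, 2, 2, 0, -2, -2, 0, 1;
    -2, -3, -2, 0, 1, 0, -2, -3, -2, 0;
    -1, -2, -2, -1, 0, 0, -1, -2, -2, -1]
noncomputable def H6 : Matrix (Fin 10) (Fin 10) ℂ :=
  Matrix.of fun i j => (A6 i j : ℂ) + (B6 i j : ℂ) * zetaC 6

lemma hH6 : ∀ i j, H6 i j ∈ Rk 6 := fun _ _ =>
  Subring.add_mem _ (intCast_mem _ _) (Subring.mul_mem _ (intCast_mem _ _) (zetaC_mem 6))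

set_option maxHeartbeats 2000000 in
lemma hHG6 : ∀ i m : Fin 10,
    ∑ j, H6 i j * Gmat 6 10 j m = if i = m then 1 + zetaC 6 else 0 := by
  have hconj := hconjk6
  have hrel := hrelk6
  have hrel3 := hrel3k6
  intro i m
  fin_cases i <;> fin_cases m <;>
    simp only [H6, A6, B6, Gmat, Matrix.of_apply, hconj, Fin.sum_univ_succ, Fin.sum_univ_zero,
      Fin.isValue, Matrix.cons_val', Matrix.cons_val_zero, Matrix.cons_val_one, Matrix.head_cons,
      Matrix.head_fin_const, Matrix.cons_val_succ, Matrix.empty_val', Matrix.cons_val_fin_one,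
      Fin.mk_zero, Fin.mk_one, Fin.val_zero, Fin.val_one, Fin.succ_zero_eq_one] <;>
    norm_num [Fin.ext_iff, Fin.val_succ] <;>
    first
      | ring1
      | (simp only [hrel3, hrel]; ring1)
      | (ring_nf; simp only [hrel3, hrel]; ring1)

/-- The Hermitian dual `Λ_k^∨` of `Λ_k = ℤ[ζ_k]^{2k−2}` with respect to the form `⋆` with
Gram matrix `G_k` satisfies `(1+ζ_k)·Λ_k^∨ = Λ_k`. -/
theorem hermitian_dual_of_Gk (k : ℕ) (hk : k ∈ ({3, 4, 6} : Set ℕ)) :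
    (1 + zetaC k) •
        {x : Fin (2 * k - 2) → ℂ |
          ∀ v : Fin (2 * k - 2) → ℂ, (∀ i, v i ∈ Rk k) →
            hermF (Gmat k (2 * k - 2)) x v ∈ Rk k} =
      {x : Fin (2 * k - 2) → ℂ | ∀ i, x i ∈ Rk k} := by
  simp only [Set.mem_insert_iff, Set.mem_singleton_iff] at hk
  rcases hk with rfl | rfl | rfl
  · exact dual_eq 3 (2 * 3 - 2) (by norm_num) halpha3 H3 hH3 hHG3
  · exact dual_eq 4 (2 * 4 - 2) (by norm_num) halpha4 H4 hH4 hHG4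
  · exact dual_eq 6 (2 * 6 - 2) (by norm_num) halpha6 H6 hH6 hHG6

end
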